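/- Let p,q ∈ S² be distinct, non-antipodal points and let 0 < D < 2π. The spherical ellipse E = {x ∈ S² : d_s(p,x) + d_s(x,q) ≤ D} with foci p,q is spherically convex if and only if D < π. Furthermore, if D = π, then E is the closed hemisphere centered at the midpoint m of the segment [p,q]_s. -/

import Mathlib

open Real Set MeasureTheory Metric Filter
open scoped RealInnerProductSpace ENNReal Topology

noncomputable section

/-- Euclidean 3-space; the unit sphere `S²` is `Metric.sphere (0 : E3) 1`. -/
abbrev E3 : Type := EuclideanSpace ℝ (Fin 3)

/-- The spherical distance `d_s(x,y) = arccos ⟨x,y⟩`. -/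
def sphDist (x y : E3) : ℝ := Real.arccos ⟪x, y⟫

/-- The shorter great-circle arc (spherical segment) joining two non-antipodal
unit vectors: the radial projection of the Euclidean segment-cone. -/
def sphSeg (x y : E3) : Set E3 :=
  {z | ∃ a b : ℝ, 0 ≤ a ∧ 0 ≤ b ∧ a • x + b • y ≠ 0 ∧
      z = ‖a • x + b • y‖⁻¹ • (a • x + b • y)}

/-- A set is spherically convex if it consists of unit vectors, is contained in an
open hemisphere, and contains the shorter arc joining any two of its (non-antipodal)
points. -/
def SphConvex (K : Set E3) : Prop :=
  K ⊆ sphere (0 : E3) 1 ∧ (∃ e : E3, ‖e‖ = 1 ∧ ∀ x ∈ K, 0 < ⟪e, x⟫) ∧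
    ∀ x ∈ K, ∀ y ∈ K, x ≠ -y → sphSeg x y ⊆ K

/-- Relative interior of a subset of the sphere (interior within the sphere). -/
def relInt (K : Set E3) : Set E3 :=
  {x | ∃ ε : ℝ, 0 < ε ∧ sphere (0 : E3) 1 ∩ ball x ε ⊆ K}

/-- A spherical convex body: compact, spherically convex, with nonempty
(relative) interior. -/
def SphBody (K : Set E3) : Prop :=
  IsCompact K ∧ SphConvex K ∧ (K ∩ relInt K).Nonempty

/-- Relative boundary of a subset of the sphere. -/
def relFrontier (K : Set E3) : Set E3 := K \ relInt K

/-- Perimeter: 1-dimensional Hausdorff measure of the (relative) boundary. -/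
def sphPerim (K : Set E3) : ℝ≥0∞ := μH[1] (relFrontier K)

/-- Spherical diameter: supremum of pairwise spherical distances. -/
def sphDiam (X : Set E3) : ℝ := sSup {d | ∃ x ∈ X, ∃ y ∈ X, d = sphDist x y}

/-- The point of `S²` with latitude `θ` (signed distance from the great circle `L`
in the `(x,y)`-plane) and longitude `φ` (signed distance along a distance curve from
the half great circle `H` in the `(x,z)`-plane). -/
def sphPt (θ φ : ℝ) : E3 :=
  (WithLp.equiv 2 (Fin 3 → ℝ)).symm
    ![Real.cos θ * Real.cos φ, Real.cos θ * Real.sin φ, Real.sin θ]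

/-- The center `c = (1,0,0)` of the fixed open hemisphere `S`. -/
def ce : E3 := sphPt 0 0

/-- The fixed open hemisphere `S` centered at `c = (1,0,0)`. -/
def hemi : Set E3 := {p ∈ sphere (0 : E3) 1 | 0 < p 0}

/-- The distance curve `C_θ ⊆ S` with axis `L` at signed spherical distance `θ`
from `L`; `C_0 = L`. -/
def distCurve (θ : ℝ) : Set E3 := {p | ∃ φ ∈ Ioo (-(π/2)) (π/2), p = sphPt θ φ}

/-- The set of longitudes `φ` at which the distance curve `C_θ` meets `K`. -/
def sliceSet (K : Set E3) (θ : ℝ) : Set ℝ :=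
  {φ | φ ∈ Ioo (-(π/2)) (π/2) ∧ sphPt θ φ ∈ K}

/-- The spherical Steiner symmetral `σ_{L,H}(K)` with respect to the standard pair
`(L,H)`: on each distance curve `C_θ` meeting `K`, the arc `K ∩ C_θ` is replaced by
the closed subarc of `C_θ` of the same (angular) length centered at `C_θ ∩ H`
(the point of longitude `0`). -/
def steiner (K : Set E3) : Set E3 :=
  {p | ∃ θ ∈ Ioo (-(π/2)) (π/2), ∃ φ : ℝ, p = sphPt θ φ ∧ (sliceSet K θ).Nonempty ∧
      |φ| ≤ (sSup (sliceSet K θ) - sInf (sliceSet K θ)) / 2}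

/-- The connectedness property: `K ∩ C` is connected (possibly empty or a point)
for every distance curve `C` with axis `L`. -/
def ConnProp (K : Set E3) : Prop := ∀ θ : ℝ, IsPreconnected (K ∩ distCurve θ)

/-- Angular length of the arc `K ∩ C_θ` (zero if the arc is empty or a point). -/
def angLen (K : Set E3) (θ : ℝ) : ℝ := sSup (sliceSet K θ) - sInf (sliceSet K θ)

/-- The monotonicity part of the angular monotonicity property: the angular length
of `K ∩ C_θ` is nonincreasing for `θ ≥ 0` and nondecreasing for `θ ≤ 0`. -/
def AngMonoLen (K : Set E3) : Prop :=
  (∀ θ₁ θ₂ : ℝ, 0 ≤ θ₁ → θ₁ ≤ θ₂ → angLen K θ₂ ≤ angLen K θ₁) ∧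
  (∀ θ₁ θ₂ : ℝ, θ₁ ≤ θ₂ → θ₂ ≤ 0 → angLen K θ₁ ≤ angLen K θ₂)

/-- The angular monotonicity property (including the connectedness of all the
arcs `K ∩ C_θ`). -/
def AngMono (K : Set E3) : Prop := ConnProp K ∧ AngMonoLen K

/-- `K` is symmetric with respect to the spherical point reflection in `c`. -/
def cSymm (K : Set E3) : Prop := ∀ x ∈ K, (2 * ⟪x, ce⟫) • ce - x ∈ K

/-- The closed spherical cap (ball) of radius `r` centered at `x`. -/
def cap (x : E3) (r : ℝ) : Set E3 := {y ∈ sphere (0 : E3) 1 | sphDist x y ≤ r}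

/-- Rotation of `S²` around the axis through `c = (1,0,0)` by angle `α`. -/
def rotc (α : ℝ) (p : E3) : E3 :=
  (WithLp.equiv 2 (Fin 3 → ℝ)).symm
    ![p 0, Real.cos α * p 1 - Real.sin α * p 2, Real.sin α * p 1 + Real.cos α * p 2]

/-- The Steiner symmetrization `σ_{L',H'}` with `L' ∩ H' = {c}`, where `(L',H')`
is the standard pair `(L,H)` rotated around `c` by angle `α`. -/
def steinerAt (α : ℝ) (K : Set E3) : Set E3 := rotc α '' steiner (rotc (-α) '' K)

/-- The general Steiner symmetrization on `S²` with respect to the frame obtained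
from the standard one by the orthogonal map `g`. -/
def steinerG (g : E3 ≃ₗᵢ[ℝ] E3) (K : Set E3) : Set E3 := ⇑g '' steiner (⇑g.symm '' K)

/-- The result of applying a finite sequence of Steiner symmetrizations to `K`. -/
def steinerSeq : Set E3 → List (E3 ≃ₗᵢ[ℝ] E3) → Set E3
  | K, [] => K
  | K, g :: gs => steinerSeq (steinerG g K) gs

/-- A finite sequence of Steiner symmetrizations is applicable to `K`: at each step
the current set lies in the open hemisphere centered at the intersection point of the
current axes and satisfies the angular monotonicity property with respect to the
current symmetrization. -/
def Applicable : Set E3 → List (E3 ≃ₗᵢ[ℝ] E3) → Prop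
  | _, [] => True
  | K, g :: gs => (⇑g.symm '' K ⊆ hemi ∧ AngMono (⇑g.symm '' K)) ∧ Applicable (steinerG g K) gs

/-- The spherical convex hull: intersection of all spherically convex sets
containing the given set. -/
def sphConvexHull (A : Set E3) : Set E3 := ⋂₀ {C | SphConvex C ∧ A ⊆ C}

/-- `P` is a spherically convex polygon with at most `N` vertices: the spherical
convex hull of at most `N` unit vectors contained in an open hemisphere. -/
def IsPolyN (N : ℕ) (P : Set E3) : Prop :=
  ∃ V : Finset E3, V.card ≤ N ∧ (V : Set E3) ⊆ sphere (0 : E3) 1 ∧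
    (∃ e : E3, ‖e‖ = 1 ∧ ∀ v ∈ V, 0 < ⟪e, v⟫) ∧ P = sphConvexHull (V : Set E3)

/-- `A_N(X)`: supremum of the areas of spherically convex polygons with at most `N`
vertices contained in `X`. -/
def AN (N : ℕ) (X : Set E3) : ℝ≥0∞ :=
  ⨆ (P : Set E3) (_ : IsPolyN N P ∧ P ⊆ X), μH[2] P

/-- First moment (vector-valued integral) of a subset of the sphere. -/
def sphMoment (A : Set E3) : E3 := ∫ u in A, u ∂μH[2]

/-- The spherical centroid `g_s(A)`: the normalized first moment. -/
def sphCentroid (A : Set E3) : E3 := ‖sphMoment A‖⁻¹ • sphMoment A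

namespace SE7

lemma arccos_antitone : Antitone Real.arccos := fun x y h =>
  sub_le_sub_left (Real.monotone_arcsin h) _

lemma inner_le_one {x y : E3} (hx : ‖x‖ = 1) (hy : ‖y‖ = 1) :
    -1 ≤ ⟪x, y⟫ ∧ ⟪x, y⟫ ≤ 1 := by
  have := abs_real_inner_le_norm x y
  rw [hx, hy, mul_one] at this
  exact abs_le.mp this

/-- K0 -/
lemma arccos_add_le_of {u v D : ℝ} (hu : -1 ≤ u) (hu1 : u ≤ 1) (hv : -1 ≤ v) (hv1 : v ≤ 1)
    (hD : Real.arccos u ≤ D) (hDpi : D ≤ π)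
    (h : Real.cos D * u + Real.sin D * Real.sqrt (1 - u ^ 2) ≤ v) :
    Real.arccos u + Real.arccos v ≤ D := by
  have hA0 := Real.arccos_nonneg u
  have hcos : Real.cos (D - Real.arccos u) = Real.cos D * u + Real.sin D * Real.sqrt (1 - u ^ 2) := by
    rw [Real.cos_sub, Real.cos_arccos hu hu1, Real.sin_arccos]
  have h1 : Real.cos (D - Real.arccos u) ≤ v := by rw [hcos]; exact h
  have h2 : Real.arccos v ≤ D - Real.arccos u := by
    calc Real.arccos v ≤ Real.arccos (Real.cos (D - Real.arccos u)) := arccos_antitone h1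
    _ = D - Real.arccos u := Real.arccos_cos (by linarith) (by linarith)
  linarith

/-- K1 -/
lemma arccos_add_le_iff {u v D : ℝ} (hu : -1 ≤ u) (hu1 : u ≤ 1) (hv : -1 ≤ v) (hv1 : v ≤ 1)
    (hD0 : 0 < D) (hDpi : D < π) :
    Real.arccos u + Real.arccos v ≤ D ↔
      (Real.cos D * u + Real.sin D * Real.sqrt (1 - u ^ 2) ≤ v ∧
       Real.cos D * v + Real.sin D * Real.sqrt (1 - v ^ 2) ≤ u) := by
  have hA0 := Real.arccos_nonneg u
  have hB0 := Real.arccos_nonneg v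
  have hApi := Real.arccos_le_pi u
  have hBpi := Real.arccos_le_pi v
  constructor
  · intro h
    constructor
    · have hcos : Real.cos (D - Real.arccos u)
          = Real.cos D * u + Real.sin D * Real.sqrt (1 - u ^ 2) := by
        rw [Real.cos_sub, Real.cos_arccos hu hu1, Real.sin_arccos]
      rw [← hcos, ← Real.cos_arccos hv hv1]
      exact Real.cos_le_cos_of_nonneg_of_le_pi hB0 (by linarith) (by linarith)
    · have hcos : Real.cos (D - Real.arccos v)
          = Real.cos D * v + Real.sin D * Real.sqrt (1 - v ^ 2) := by
        rw [Real.cos_sub, Real.cos_arccos hv hv1, Real.sin_arccos]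
      rw [← hcos, ← Real.cos_arccos hu hu1]
      exact Real.cos_le_cos_of_nonneg_of_le_pi hA0 (by linarith) (by linarith)
  · rintro ⟨h1, h2⟩
    by_cases hAD : Real.arccos u ≤ D
    · exact arccos_add_le_of hu hu1 hv hv1 hAD hDpi.le h1
    · push_neg at hAD
      -- from h1 : cos(D - A) ≤ v with A > D, get B ≤ A - D
      have hcos : Real.cos (Real.arccos u - D)
          = Real.cos D * u + Real.sin D * Real.sqrt (1 - u ^ 2) := by
        rw [← Real.cos_neg, neg_sub, Real.cos_sub, Real.cos_arccos hu hu1, Real.sin_arccos]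
      have hBA : Real.arccos v ≤ Real.arccos u - D := by
        calc Real.arccos v ≤ Real.arccos (Real.cos (Real.arccos u - D)) :=
              arccos_antitone (by rw [hcos]; exact h1)
        _ = Real.arccos u - D := Real.arccos_cos (by linarith) (by linarith)
      by_cases hBD : Real.arccos v ≤ D
      · have := arccos_add_le_of hv hv1 hu hu1 hBD hDpi.le h2
        linarith
      · push_neg at hBD
        have hcos' : Real.cos (Real.arccos v - D)
            = Real.cos D * v + Real.sin D * Real.sqrt (1 - v ^ 2) := by
          rw [← Real.cos_neg, neg_sub, Real.cos_sub, Real.cos_arccos hv hv1, Real.sin_arccos]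
        have hAB : Real.arccos u ≤ Real.arccos v - D := by
          calc Real.arccos u ≤ Real.arccos (Real.cos (Real.arccos v - D)) :=
                arccos_antitone (by rw [hcos']; exact h2)
          _ = Real.arccos v - D := Real.arccos_cos (by linarith) (by linarith)
        linarith

/-- K3 -/
lemma arccos_add_le_pi_iff {u v : ℝ} (hu : -1 ≤ u) (hu1 : u ≤ 1) (hv : -1 ≤ v) (hv1 : v ≤ 1) :
    Real.arccos u + Real.arccos v ≤ π ↔ 0 ≤ u + v := by
  constructor
  · intro h
    by_contra hc
    push_neg at hc
    have hvu : v < -u := by linarith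
    have := Real.strictAntiOn_arccos ⟨hv, hv1⟩ ⟨by linarith, by linarith⟩ hvu
    rw [Real.arccos_neg] at this
    linarith
  · intro h
    have : Real.arccos v ≤ Real.arccos (-u) := arccos_antitone (by linarith)
    rw [Real.arccos_neg] at this
    linarith

/-- K2 -/
lemma pos_of_arccos_add_lt_pi {u v : ℝ} (hu : -1 ≤ u) (hu1 : u ≤ 1) (hv : -1 ≤ v) (hv1 : v ≤ 1)
    (h : Real.arccos u + Real.arccos v < π) : 0 < u + v := by
  by_contra hc
  push_neg at hc
  have : Real.arccos (-u) ≤ Real.arccos v := arccos_antitone (by linarith)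
  rw [Real.arccos_neg] at this
  linarith

/-- K4 -/
lemma norm_proj {p z : E3} (hp : ‖p‖ = 1) (hz : ‖z‖ = 1) :
    ‖z - ⟪p, z⟫ • p‖ = Real.sqrt (1 - ⟪p, z⟫ ^ 2) := by
  have h1 : ‖z - ⟪p, z⟫ • p‖ ^ 2 = 1 - ⟪p, z⟫ ^ 2 := by
    rw [← real_inner_self_eq_norm_sq]
    simp only [inner_sub_left, inner_sub_right, real_inner_smul_left, real_inner_smul_right,
      real_inner_self_eq_norm_sq, hp, hz]
    rw [real_inner_comm z p]
    rw [norm_smul, hp, Real.norm_eq_abs, mul_one, sq_abs]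
    ring
  rw [← h1, Real.sqrt_sq (norm_nonneg _)]

end SE7

namespace SE7

def G (p q : E3) (D : ℝ) (z : E3) : ℝ :=
  ⟪q, z⟫ - Real.cos D * ⟪p, z⟫ - Real.sin D * ‖z - ⟪p, z⟫ • p‖

lemma G_smul (p q : E3) (D : ℝ) {c : ℝ} (hc : 0 ≤ c) (z : E3) :
    G p q D (c • z) = c * G p q D z := by
  unfold G
  have hpr : (c • z) - ⟪p, c • z⟫ • p = c • (z - ⟪p, z⟫ • p) := by
    rw [real_inner_smul_right]; module
  rw [hpr, norm_smul, real_inner_smul_right, real_inner_smul_right, Real.norm_eq_abs,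
    abs_of_nonneg hc]
  ring

lemma G_superadd (p q : E3) {D : ℝ} (hs : 0 ≤ Real.sin D) (x y : E3) :
    G p q D x + G p q D y ≤ G p q D (x + y) := by
  unfold G
  have hpr : (x + y) - ⟪p, x + y⟫ • p = (x - ⟪p, x⟫ • p) + (y - ⟪p, y⟫ • p) := by
    rw [inner_add_right]; module
  have hn : ‖(x + y) - ⟪p, x + y⟫ • p‖ ≤ ‖x - ⟪p, x⟫ • p‖ + ‖y - ⟪p, y⟫ • p‖ := by
    rw [hpr]; exact norm_add_le _ _
  rw [inner_add_right (𝕜 := ℝ) p x y] at hn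
  rw [inner_add_right (𝕜 := ℝ) q x y, inner_add_right (𝕜 := ℝ) p x y]
  nlinarith [mul_le_mul_of_nonneg_left hn hs]

lemma mem_iff {p q : E3} (hp : ‖p‖ = 1) (hq : ‖q‖ = 1) {D : ℝ} (hD0 : 0 < D) (hDpi : D < π)
    {z : E3} (hz : ‖z‖ = 1) :
    sphDist p z + sphDist z q ≤ D ↔ 0 ≤ G p q D z ∧ 0 ≤ G q p D z := by
  obtain ⟨hu, hu1⟩ := inner_le_one hp hz
  obtain ⟨hv, hv1⟩ := inner_le_one hq hz
  have e1 : sphDist z q = Real.arccos ⟪q, z⟫ := by rw [sphDist, real_inner_comm q z]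
  rw [sphDist, e1, arccos_add_le_iff hu hu1 hv hv1 hD0 hDpi]
  unfold G
  rw [norm_proj hp hz, norm_proj hq hz]
  constructor <;> rintro ⟨h1, h2⟩ <;> constructor <;> linarith

end SE7


/-- For distinct non-antipodal `p,q ∈ S²` and `0 < D < 2π`, the
spherical ellipse `E = {x : d_s(p,x) + d_s(x,q) ≤ D}` is spherically convex iff
`D < π`; and for `D = π` it is the closed hemisphere centered at the midpoint of
`[p,q]_s`. -/
theorem spherical_ellipse_convex_iff (p q : E3) (hp : ‖p‖ = 1) (hq : ‖q‖ = 1)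
    (hne : p ≠ q) (hna : p ≠ -q) (D : ℝ) (hD0 : 0 < D) (hD2 : D < 2 * π) :
    (SphConvex {x ∈ sphere (0 : E3) 1 | sphDist p x + sphDist x q ≤ D} ↔ D < π) ∧
    (D = π → {x ∈ sphere (0 : E3) 1 | sphDist p x + sphDist x q ≤ D}
      = {x ∈ sphere (0 : E3) 1 | 0 ≤ ⟪x, ‖p + q‖⁻¹ • (p + q)⟫}) := by
  have hpq : p + q ≠ 0 := fun h => hna (by linear_combination (norm := module) h)
  have hnpq : (0 : ℝ) < ‖p + q‖ := norm_pos_iff.mpr hpq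
  have hinv : (0 : ℝ) < ‖p + q‖⁻¹ := inv_pos.mpr hnpq
  have henorm : ‖(‖p + q‖⁻¹ • (p + q) : E3)‖ = 1 := by
    rw [norm_smul, norm_inv, norm_norm, inv_mul_cancel₀ hnpq.ne']
  constructor
  · constructor
    · -- convex → D < π
      intro hconv
      by_contra hge
      push_neg at hge
      obtain ⟨_, ⟨e, _, hepos⟩, _⟩ := hconv
      haveI : Fact (Module.finrank ℝ E3 = 2 + 1) := ⟨finrank_euclideanSpace_fin⟩
      have hfr : Module.finrank ℝ ((ℝ ∙ (p + q))ᗮ) = 2 :=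
        Submodule.finrank_orthogonal_span_singleton hpq
      have hbot : ((ℝ ∙ (p + q))ᗮ : Submodule ℝ E3) ≠ ⊥ := by
        intro h; rw [h, finrank_bot] at hfr; exact two_ne_zero hfr.symm
      obtain ⟨w, hwmem, hw0⟩ := Submodule.exists_mem_ne_zero_of_ne_bot hbot
      set x₀ : E3 := ‖w‖⁻¹ • w with hx₀
      have hnx : ‖x₀‖ = 1 := by
        rw [hx₀, norm_smul, norm_inv, norm_norm, inv_mul_cancel₀ (norm_ne_zero_iff.mpr hw0)]
      have hperp : ⟪p + q, x₀⟫ = 0 := by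
        have h1 : ⟪p + q, w⟫ = 0 :=
          (Submodule.mem_orthogonal _ w).mp hwmem _ (Submodule.mem_span_singleton_self _)
        rw [hx₀, real_inner_smul_right, h1, mul_zero]
      have hsum : ∀ y : E3, ‖y‖ = 1 → ⟪p + q, y⟫ = 0 →
          sphDist p y + sphDist y q = π := by
        intro y hy hperp'
        have h1 : ⟪p, y⟫ + ⟪q, y⟫ = 0 := by
          rw [← inner_add_left]; exact hperp'
        have h2 : ⟪y, q⟫ = -⟪p, y⟫ := by rw [real_inner_comm q y]; linarith
        rw [sphDist, sphDist, h2, Real.arccos_neg]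
        ring
      have hmem : ∀ y : E3, ‖y‖ = 1 → ⟪p + q, y⟫ = 0 →
          y ∈ {x ∈ sphere (0 : E3) 1 | sphDist p x + sphDist x q ≤ D} := by
        intro y hy hperp'
        exact ⟨mem_sphere_zero_iff_norm.mpr hy, by rw [hsum y hy hperp']; exact hge⟩
      have hx₀mem := hmem x₀ hnx hperp
      have hnegmem := hmem (-x₀) (by rw [norm_neg]; exact hnx)
        (by rw [inner_neg_right, hperp, neg_zero])
      have h1 := hepos x₀ hx₀mem
      have h2 := hepos (-x₀) hnegmem
      rw [inner_neg_right] at h2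
      linarith
    · -- D < π → convex
      intro hDpi
      have hsin : 0 ≤ Real.sin D := Real.sin_nonneg_of_nonneg_of_le_pi hD0.le hDpi.le
      refine ⟨fun x hx => hx.1, ⟨‖p + q‖⁻¹ • (p + q), henorm, ?_⟩, ?_⟩
      · intro x hx
        obtain ⟨hxs, hxd⟩ := hx
        have hx1 : ‖x‖ = 1 := mem_sphere_zero_iff_norm.mp hxs
        obtain ⟨hu, hu1⟩ := SE7.inner_le_one hp hx1
        obtain ⟨hv, hv1⟩ := SE7.inner_le_one hx1 hq
        have hpos : 0 < ⟪p, x⟫ + ⟪x, q⟫ := by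
          refine SE7.pos_of_arccos_add_lt_pi hu hu1 hv hv1 ?_
          exact lt_of_le_of_lt hxd hDpi
        have : ⟪(‖p + q‖⁻¹ • (p + q) : E3), x⟫ = ‖p + q‖⁻¹ * (⟪p, x⟫ + ⟪q, x⟫) := by
          rw [real_inner_smul_left, inner_add_left]
        rw [this]
        have : ⟪q, x⟫ = ⟪x, q⟫ := real_inner_comm x q
        nlinarith
      · rintro x hx y hy - z ⟨a, b, ha, hb, hw0, hzeq⟩
        obtain ⟨hxs, hxd⟩ := hx
        obtain ⟨hys, hyd⟩ := hy
        have hx1 : ‖x‖ = 1 := mem_sphere_zero_iff_norm.mp hxs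
        have hy1 : ‖y‖ = 1 := mem_sphere_zero_iff_norm.mp hys
        obtain ⟨hGx, hGx'⟩ := (SE7.mem_iff hp hq hD0 hDpi hx1).mp hxd
        obtain ⟨hGy, hGy'⟩ := (SE7.mem_iff hp hq hD0 hDpi hy1).mp hyd
        set w : E3 := a • x + b • y with hw
        have hz1 : ‖z‖ = 1 := by
          rw [hzeq, norm_smul, norm_inv, norm_norm, inv_mul_cancel₀ (norm_ne_zero_iff.mpr hw0)]
        have key : ∀ p' q' : E3, 0 ≤ SE7.G p' q' D x → 0 ≤ SE7.G p' q' D y →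
            0 ≤ SE7.G p' q' D z := by
          intro p' q' h1 h2
          have hGw : 0 ≤ SE7.G p' q' D w := by
            have hA := SE7.G_superadd p' q' hsin (a • x) (b • y)
            rw [SE7.G_smul p' q' D ha x, SE7.G_smul p' q' D hb y] at hA
            have := mul_nonneg ha h1
            have := mul_nonneg hb h2
            rw [hw]
            linarith
          rw [hzeq, SE7.G_smul p' q' D (by positivity) w]
          positivity
        refine ⟨mem_sphere_zero_iff_norm.mpr hz1, ?_⟩
        exact (SE7.mem_iff hp hq hD0 hDpi hz1).mpr ⟨key p q hGx hGy, key q p hGx' hGy'⟩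
  · -- D = π case
    intro hDpi
    ext x
    simp only [mem_sep_iff, mem_sphere_zero_iff_norm]
    refine and_congr_right fun hx1 => ?_
    obtain ⟨hu, hu1⟩ := SE7.inner_le_one hp hx1
    obtain ⟨hv, hv1⟩ := SE7.inner_le_one hx1 hq
    rw [hDpi, sphDist, sphDist, SE7.arccos_add_le_pi_iff hu hu1 hv hv1]
    have he : ⟪x, ‖p + q‖⁻¹ • (p + q)⟫ = ‖p + q‖⁻¹ * (⟪p, x⟫ + ⟪x, q⟫) := by
      rw [real_inner_smul_right, inner_add_right, real_inner_comm x p, real_inner_comm q x]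
    rw [he, mul_nonneg_iff_of_pos_left hinv]
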